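/- arXiv:2510.08507 — 2 statements merged into one kernel-verified Lean document; each statement's English description precedes it below -/
import Mathlib

section
/- Let X_j, Y_j (j = 1,…,N) be finite-dimensional complex Hilbert spaces with dimensions d_{X_j}, d_{Y_j}, and X := X₁⊗⋯⊗X_N, Y := Y₁⊗⋯⊗Y_N. The linear map L^NS_{XY} on matrices over X⊗Y satisfies: (i) L^NS_{XY} ∘ L^NS_{XY} = L^NS_{XY}; (ii) L^NS_{XY} is self-adjoint with respect to the Hilbert–Schmidt inner product, i.e. tr[(L^NS_{XY}(P))† Q] = tr[P† L^NS_{XY}(Q)] for all matrices P, Q; (iii) L^NS_{XY} maps Hermitian matrices to Hermitian matrices, and a Hermitian matrix J on X⊗Y satisfies L^NS_{XY}(J) = J if and only if tr_{Y_j}[J] = (tr_{X_jY_j}[J]) ⊗ (I_{X_j}/d_{X_j}) for every j = 1,…,N. Hence L^NS_{XY} is the orthogonal projection of Hermitian matrices onto the subspace of Hermitian matrices satisfying the no-signaling constraints. -/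
/-!
STATEMENT 2: The map L^NS_{XY} = L^NS_{X₁Y₁} ∘ ⋯ ∘ L^NS_{X_NY_N} on matrices over
X⊗Y (X = ⊗ⱼXⱼ, Y = ⊗ⱼYⱼ) is idempotent, Hilbert–Schmidt self-adjoint, preserves
Hermiticity, and its Hermitian fixed points are exactly the Hermitian matrices
satisfying the no-signaling constraints ⌊Yⱼ⌋J = ⌊XⱼYⱼ⌋J (equivalently,
tr_{Yⱼ}[J] = (tr_{XⱼYⱼ}[J]) ⊗ (I_{Xⱼ}/d_{Xⱼ})) for every j.
-/

open Matrix

namespace ICO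

variable {N : ℕ} {κX κY : Fin N → Type}
  [∀ j, Fintype (κX j)] [∀ j, DecidableEq (κX j)]
  [∀ j, Fintype (κY j)] [∀ j, DecidableEq (κY j)]

/-- Smoothing over the factor `Y j`: `⌊Y_j⌋P := (tr_{Y_j} P) ⊗ (I_{Y_j}/d_{Y_j})`. -/
noncomputable def floorY (j : Fin N)
    (P : Matrix ((∀ i, κX i) × (∀ i, κY i)) ((∀ i, κX i) × (∀ i, κY i)) ℂ) :
    Matrix ((∀ i, κX i) × (∀ i, κY i)) ((∀ i, κX i) × (∀ i, κY i)) ℂ :=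
  Matrix.of fun p q =>
    if p.2 j = q.2 j then
      (Fintype.card (κY j) : ℂ)⁻¹ *
        ∑ c : κY j, P (p.1, Function.update p.2 j c) (q.1, Function.update q.2 j c)
    else 0

/-- Smoothing over the factors `X j ⊗ Y j`. -/
noncomputable def floorXY (j : Fin N)
    (P : Matrix ((∀ i, κX i) × (∀ i, κY i)) ((∀ i, κX i) × (∀ i, κY i)) ℂ) :
    Matrix ((∀ i, κX i) × (∀ i, κY i)) ((∀ i, κX i) × (∀ i, κY i)) ℂ :=
  Matrix.of fun p q =>
    if p.1 j = q.1 j ∧ p.2 j = q.2 j then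
      ((Fintype.card (κX j) : ℂ) * (Fintype.card (κY j) : ℂ))⁻¹ *
        ∑ a : κX j, ∑ c : κY j,
          P (Function.update p.1 j a, Function.update p.2 j c)
            (Function.update q.1 j a, Function.update q.2 j c)
    else 0

/-- `L^NS_{X_jY_j}(P) := P − ⌊Y_j⌋P + ⌊X_jY_j⌋P`. -/
noncomputable def LNSstep (j : Fin N)
    (P : Matrix ((∀ i, κX i) × (∀ i, κY i)) ((∀ i, κX i) × (∀ i, κY i)) ℂ) :
    Matrix ((∀ i, κX i) × (∀ i, κY i)) ((∀ i, κX i) × (∀ i, κY i)) ℂ :=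
  P - floorY j P + floorXY j P

/-- `L^NS_{XY} := L^NS_{X₁Y₁} ∘ ⋯ ∘ L^NS_{X_NY_N}`. -/
noncomputable def LNS
    (P : Matrix ((∀ i, κX i) × (∀ i, κY i)) ((∀ i, κX i) × (∀ i, κY i)) ℂ) :
    Matrix ((∀ i, κX i) × (∀ i, κY i)) ((∀ i, κX i) × (∀ i, κY i)) ℂ :=
  (List.finRange N).foldr (fun j Q => LNSstep j Q) P

set_option linter.unusedSectionVars false

private lemma floorY_add (j : Fin N)
    (P Q : Matrix ((∀ i, κX i) × (∀ i, κY i)) ((∀ i, κX i) × (∀ i, κY i)) ℂ) :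
    floorY j (P + Q) = floorY j P + floorY j Q := by
  ext p q
  simp only [floorY, Matrix.of_apply, Matrix.add_apply]
  split_ifs with h
  · rw [Finset.sum_add_distrib, mul_add]
  · simp

private lemma floorY_sub (j : Fin N)
    (P Q : Matrix ((∀ i, κX i) × (∀ i, κY i)) ((∀ i, κX i) × (∀ i, κY i)) ℂ) :
    floorY j (P - Q) = floorY j P - floorY j Q := by
  ext p q
  simp only [floorY, Matrix.of_apply, Matrix.sub_apply]
  split_ifs with h
  · rw [Finset.sum_sub_distrib, mul_sub]
  · simp

private lemma floorXY_add (j : Fin N)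
    (P Q : Matrix ((∀ i, κX i) × (∀ i, κY i)) ((∀ i, κX i) × (∀ i, κY i)) ℂ) :
    floorXY j (P + Q) = floorXY j P + floorXY j Q := by
  ext p q
  simp only [floorXY, Matrix.of_apply, Matrix.add_apply]
  split_ifs with h
  · simp only [Finset.sum_add_distrib, mul_add]
  · simp

private lemma floorXY_sub (j : Fin N)
    (P Q : Matrix ((∀ i, κX i) × (∀ i, κY i)) ((∀ i, κX i) × (∀ i, κY i)) ℂ) :
    floorXY j (P - Q) = floorXY j P - floorXY j Q := by
  ext p q
  simp only [floorXY, Matrix.of_apply, Matrix.sub_apply]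
  split_ifs with h
  · simp only [Finset.sum_sub_distrib, mul_sub]
  · simp

private lemma floorY_floorY (j : Fin N)
    (P : Matrix ((∀ i, κX i) × (∀ i, κY i)) ((∀ i, κX i) × (∀ i, κY i)) ℂ) :
    floorY j (floorY j P) = floorY j P := by
  ext p q
  have hne : Nonempty (κY j) := ⟨p.2 j⟩
  have hd : (Fintype.card (κY j) : ℂ) ≠ 0 := Nat.cast_ne_zero.mpr Fintype.card_ne_zero
  simp only [floorY, Matrix.of_apply]
  split_ifs with h
  · simp only [Function.update_self, if_true, Function.update_idem]
    rw [Finset.sum_const, Finset.card_univ, nsmul_eq_mul]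
    rw [← mul_assoc, inv_mul_cancel₀ hd, one_mul]
  · rfl

private lemma floorXY_floorXY (j : Fin N)
    (P : Matrix ((∀ i, κX i) × (∀ i, κY i)) ((∀ i, κX i) × (∀ i, κY i)) ℂ) :
    floorXY j (floorXY j P) = floorXY j P := by
  ext p q
  have hneX : Nonempty (κX j) := ⟨p.1 j⟩
  have hneY : Nonempty (κY j) := ⟨p.2 j⟩
  have hd : ((Fintype.card (κX j) : ℂ) * (Fintype.card (κY j) : ℂ)) ≠ 0 :=
    mul_ne_zero (Nat.cast_ne_zero.mpr Fintype.card_ne_zero)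
      (Nat.cast_ne_zero.mpr Fintype.card_ne_zero)
  simp only [floorXY, Matrix.of_apply]
  split_ifs with h
  · simp only [Function.update_self, and_self, if_true, Function.update_idem]
    rw [Finset.sum_const, Finset.sum_const, Finset.card_univ, Finset.card_univ,
      nsmul_eq_mul, nsmul_eq_mul]
    rw [← mul_assoc, ← mul_assoc]
    rw [show ((Fintype.card (κX j) : ℂ) * (Fintype.card (κY j) : ℂ))⁻¹ *
        (Fintype.card (κX j) : ℂ) * (Fintype.card (κY j) : ℂ) = 1 by
      field_simp]
    rw [one_mul]
  · rfl

private lemma floorY_floorXY (j : Fin N)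
    (P : Matrix ((∀ i, κX i) × (∀ i, κY i)) ((∀ i, κX i) × (∀ i, κY i)) ℂ) :
    floorY j (floorXY j P) = floorXY j P := by
  ext p q
  have hneY : Nonempty (κY j) := ⟨p.2 j⟩
  have hdY : (Fintype.card (κY j) : ℂ) ≠ 0 := Nat.cast_ne_zero.mpr Fintype.card_ne_zero
  simp only [floorY, floorXY, Matrix.of_apply]
  by_cases h2 : p.2 j = q.2 j
  · by_cases h1 : p.1 j = q.1 j
    · simp only [h2, h1, if_true, Function.update_self, and_true, true_and,
        Function.update_idem, and_self]
      rw [Finset.sum_const, Finset.card_univ, nsmul_eq_mul, ← mul_assoc,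
        inv_mul_cancel₀ hdY, one_mul]
    · simp [h1, h2]
  · simp [h2]

private lemma floorXY_floorY (j : Fin N)
    (P : Matrix ((∀ i, κX i) × (∀ i, κY i)) ((∀ i, κX i) × (∀ i, κY i)) ℂ) :
    floorXY j (floorY j P) = floorXY j P := by
  ext p q
  have hneY : Nonempty (κY j) := ⟨p.2 j⟩
  have hdY : (Fintype.card (κY j) : ℂ) ≠ 0 := Nat.cast_ne_zero.mpr Fintype.card_ne_zero
  simp only [floorXY, floorY, Matrix.of_apply]
  split_ifs with h
  · simp only [Function.update_self, if_true, Function.update_idem]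
    congr 1
    refine Finset.sum_congr rfl fun a _ => ?_
    rw [Finset.sum_const, Finset.card_univ, nsmul_eq_mul, ← mul_assoc,
      mul_inv_cancel₀ hdY, one_mul]
  · rfl

/-! ### auxiliary sum lemmas -/

private lemma sum3_comm {α β γ : Type*} [Fintype α] [Fintype β] [Fintype γ]
    (F : α → β → γ → ℂ) :
    ∑ a, ∑ b, ∑ c, F a b c = ∑ b, ∑ c, ∑ a, F a b c := by
  rw [Finset.sum_comm]
  exact Finset.sum_congr rfl fun b _ => Finset.sum_comm

private lemma sum4_comm {α β γ δ : Type*} [Fintype α] [Fintype β] [Fintype γ] [Fintype δ]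
    (F : α → β → γ → δ → ℂ) :
    ∑ a, ∑ b, ∑ c, ∑ d, F a b c d = ∑ c, ∑ d, ∑ a, ∑ b, F a b c d := by
  trans ∑ a, ∑ c, ∑ d, ∑ b, F a b c d
  · refine Finset.sum_congr rfl fun a _ => ?_
    rw [Finset.sum_comm]
    exact Finset.sum_congr rfl fun c _ => Finset.sum_comm
  · rw [Finset.sum_comm]
    exact Finset.sum_congr rfl fun c _ => Finset.sum_comm

private lemma swap_sum {α γ : Type*} [Fintype α] [Fintype γ]
    (cond : α → Prop) [DecidablePred cond]
    (e : α → γ → α) (r : α → γ)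
    (h1 : ∀ a c, cond a → cond (e a c))
    (h2 : ∀ a c, cond a → e (e a c) (r a) = a)
    (h3 : ∀ a c, cond a → r (e a c) = c)
    (f g : α → ℂ) :
    ∑ a, (if cond a then ∑ c, f (e a c) * g a else 0)
      = ∑ a, (if cond a then ∑ c, f a * g (e a c) else 0) := by
  have key : ∀ (F : α → γ → ℂ),
      ∑ a, (if cond a then ∑ c, F a c else 0)
        = ∑ p ∈ Finset.univ.filter (fun p : α × γ => cond p.1), F p.1 p.2 := by
    intro F
    rw [Finset.sum_filter, Fintype.sum_prod_type]
    refine Finset.sum_congr rfl fun a _ => ?_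
    split_ifs <;> simp
  rw [key, key]
  refine Finset.sum_nbij' (fun p => (e p.1 p.2, r p.1)) (fun p => (e p.1 p.2, r p.1))
    ?_ ?_ ?_ ?_ ?_
  · rintro ⟨a, c⟩ ha
    simp only [Finset.mem_filter, Finset.mem_univ, true_and] at ha ⊢
    exact h1 a c ha
  · rintro ⟨a, c⟩ ha
    simp only [Finset.mem_filter, Finset.mem_univ, true_and] at ha ⊢
    exact h1 a c ha
  · rintro ⟨a, c⟩ ha
    simp only [Finset.mem_filter, Finset.mem_univ, true_and] at ha
    simp [h2 a c ha, h3 a c ha]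
  · rintro ⟨a, c⟩ ha
    simp only [Finset.mem_filter, Finset.mem_univ, true_and] at ha
    simp [h2 a c ha, h3 a c ha]
  · rintro ⟨a, c⟩ ha
    simp only [Finset.mem_filter, Finset.mem_univ, true_and] at ha
    simp [h2 a c ha]

private lemma trace_conjT_mul {m : Type*} [Fintype m]
    (A B : Matrix m m ℂ) :
    (Aᴴ * B).trace = ∑ u, ∑ v, star (A u v) * B u v := by
  simp only [Matrix.trace, Matrix.diag, Matrix.mul_apply, Matrix.conjTranspose_apply]
  exact Finset.sum_comm


private lemma floorY_comm {i j : Fin N} (h : i ≠ j)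
    (P : Matrix ((∀ i, κX i) × (∀ i, κY i)) ((∀ i, κX i) × (∀ i, κY i)) ℂ) :
    floorY i (floorY j P) = floorY j (floorY i P) := by
  ext p q
  simp only [floorY, Matrix.of_apply, Function.update_of_ne (Ne.symm h),
    Function.update_of_ne h]
  by_cases h1 : p.2 i = q.2 i <;> by_cases h2 : p.2 j = q.2 j <;>
    simp only [h1, h2, if_true, if_false, ite_true, ite_false] <;>
    try simp
  simp only [Finset.mul_sum]
  rw [Finset.sum_comm]
  refine Finset.sum_congr rfl fun c' _ => Finset.sum_congr rfl fun c _ => ?_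
  rw [Function.update_comm h c c' p.2, Function.update_comm h c c' q.2]
  ring

private lemma floorY_floorXY_comm {i j : Fin N} (h : i ≠ j)
    (P : Matrix ((∀ i, κX i) × (∀ i, κY i)) ((∀ i, κX i) × (∀ i, κY i)) ℂ) :
    floorY i (floorXY j P) = floorXY j (floorY i P) := by
  ext p q
  simp only [floorY, floorXY, Matrix.of_apply, Function.update_of_ne (Ne.symm h),
    Function.update_of_ne h]
  by_cases h1 : p.2 i = q.2 i <;> by_cases h2 : p.1 j = q.1 j ∧ p.2 j = q.2 j <;>
    simp only [h1, h2, if_true, if_false, ite_true, ite_false] <;>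
    try simp [h2]
  simp only [Finset.mul_sum]
  rw [sum3_comm]
  refine Finset.sum_congr rfl fun a' _ => Finset.sum_congr rfl fun c' _ =>
    Finset.sum_congr rfl fun c _ => ?_
  rw [Function.update_comm h c c' p.2, Function.update_comm h c c' q.2]
  ring

private lemma floorXY_comm {i j : Fin N} (h : i ≠ j)
    (P : Matrix ((∀ i, κX i) × (∀ i, κY i)) ((∀ i, κX i) × (∀ i, κY i)) ℂ) :
    floorXY i (floorXY j P) = floorXY j (floorXY i P) := by
  ext p q
  simp only [floorXY, Matrix.of_apply, Function.update_of_ne (Ne.symm h),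
    Function.update_of_ne h]
  by_cases h1 : p.1 i = q.1 i ∧ p.2 i = q.2 i <;>
    by_cases h2 : p.1 j = q.1 j ∧ p.2 j = q.2 j <;>
    simp only [h1, h2, if_true, if_false, ite_true, ite_false] <;>
    try simp [h1, h2]
  simp only [Finset.mul_sum]
  rw [sum4_comm]
  refine Finset.sum_congr rfl fun a' _ => Finset.sum_congr rfl fun c' _ =>
    Finset.sum_congr rfl fun a _ => Finset.sum_congr rfl fun c _ => ?_
  rw [Function.update_comm h a a' p.1, Function.update_comm h a a' q.1,
    Function.update_comm h c c' p.2, Function.update_comm h c c' q.2]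
  ring

private lemma LNSstep_idem (j : Fin N)
    (P : Matrix ((∀ i, κX i) × (∀ i, κY i)) ((∀ i, κX i) × (∀ i, κY i)) ℂ) :
    LNSstep j (LNSstep j P) = LNSstep j P := by
  simp only [LNSstep, floorY_sub, floorY_add, floorXY_sub, floorXY_add,
    floorY_floorY, floorXY_floorXY, floorY_floorXY, floorXY_floorY]
  abel

private lemma LNSstep_comm {i j : Fin N} (h : i ≠ j)
    (P : Matrix ((∀ i, κX i) × (∀ i, κY i)) ((∀ i, κX i) × (∀ i, κY i)) ℂ) :
    LNSstep i (LNSstep j P) = LNSstep j (LNSstep i P) := by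
  simp only [LNSstep, floorY_sub, floorY_add, floorXY_sub, floorXY_add,
    floorY_comm h, floorY_floorXY_comm h, floorY_floorXY_comm (Ne.symm h), floorXY_comm h]
  abel

private noncomputable def LNSl (l : List (Fin N))
    (P : Matrix ((∀ i, κX i) × (∀ i, κY i)) ((∀ i, κX i) × (∀ i, κY i)) ℂ) :
    Matrix ((∀ i, κX i) × (∀ i, κY i)) ((∀ i, κX i) × (∀ i, κY i)) ℂ :=
  l.foldr (fun j Q => LNSstep j Q) P

private lemma LNSl_cons (k : Fin N) (t : List (Fin N))
    (P : Matrix ((∀ i, κX i) × (∀ i, κY i)) ((∀ i, κX i) × (∀ i, κY i)) ℂ) :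
    LNSl (k :: t) P = LNSstep k (LNSl t P) := rfl

private lemma step_fix {j : Fin N} {l : List (Fin N)} (hj : j ∈ l)
    (P : Matrix ((∀ i, κX i) × (∀ i, κY i)) ((∀ i, κX i) × (∀ i, κY i)) ℂ) :
    LNSstep j (LNSl l P) = LNSl l P := by
  induction l with
  | nil => simp at hj
  | cons k t ih =>
    rw [LNSl_cons]
    by_cases hk : j = k
    · subst hk; exact LNSstep_idem j _
    · have ht : j ∈ t := by
        rcases List.mem_cons.mp hj with h' | h'
        · exact absurd h' hk
        · exact h'
      rw [LNSstep_comm hk, ih ht]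

private lemma step_comm_LNSl {j : Fin N} {l : List (Fin N)} (hj : j ∉ l)
    (P : Matrix ((∀ i, κX i) × (∀ i, κY i)) ((∀ i, κX i) × (∀ i, κY i)) ℂ) :
    LNSstep j (LNSl l P) = LNSl l (LNSstep j P) := by
  induction l with
  | nil => rfl
  | cons k t ih =>
    have hk : j ≠ k := fun h => hj (h ▸ List.mem_cons_self)
    have ht : j ∉ t := fun h => hj (List.mem_cons_of_mem _ h)
    rw [LNSl_cons, LNSstep_comm hk, ih ht, LNSl_cons]

private lemma LNSl_idem {l : List (Fin N)} (hl : l.Nodup)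
    (P : Matrix ((∀ i, κX i) × (∀ i, κY i)) ((∀ i, κX i) × (∀ i, κY i)) ℂ) :
    LNSl l (LNSl l P) = LNSl l P := by
  induction l with
  | nil => rfl
  | cons k t ih =>
    have hk : k ∉ t := (List.nodup_cons.mp hl).1
    have ht : t.Nodup := (List.nodup_cons.mp hl).2
    rw [LNSl_cons, LNSl_cons, ← step_comm_LNSl hk, LNSstep_idem, ih ht]

/-! ### conjTranspose -/

private lemma floorY_conjT (j : Fin N)
    (P : Matrix ((∀ i, κX i) × (∀ i, κY i)) ((∀ i, κX i) × (∀ i, κY i)) ℂ) :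
    (floorY j P)ᴴ = floorY j Pᴴ := by
  ext p q
  simp only [conjTranspose_apply, floorY, Matrix.of_apply]
  by_cases h : p.2 j = q.2 j
  · rw [if_pos h, if_pos h.symm, star_mul']
    simp [star_sum]
  · rw [if_neg h, if_neg fun h' => h h'.symm, star_zero]

private lemma floorXY_conjT (j : Fin N)
    (P : Matrix ((∀ i, κX i) × (∀ i, κY i)) ((∀ i, κX i) × (∀ i, κY i)) ℂ) :
    (floorXY j P)ᴴ = floorXY j Pᴴ := by
  ext p q
  simp only [conjTranspose_apply, floorXY, Matrix.of_apply]
  by_cases h : p.1 j = q.1 j ∧ p.2 j = q.2 j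
  · rw [if_pos h, if_pos ⟨h.1.symm, h.2.symm⟩, star_mul']
    simp [star_sum]
  · rw [if_neg h, if_neg fun h' => h ⟨h'.1.symm, h'.2.symm⟩, star_zero]

private lemma LNSstep_conjT (j : Fin N)
    (P : Matrix ((∀ i, κX i) × (∀ i, κY i)) ((∀ i, κX i) × (∀ i, κY i)) ℂ) :
    (LNSstep j P)ᴴ = LNSstep j Pᴴ := by
  simp only [LNSstep, conjTranspose_add, conjTranspose_sub, floorY_conjT, floorXY_conjT]

private lemma LNSl_conjT (l : List (Fin N))
    (P : Matrix ((∀ i, κX i) × (∀ i, κY i)) ((∀ i, κX i) × (∀ i, κY i)) ℂ) :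
    (LNSl l P)ᴴ = LNSl l Pᴴ := by
  induction l with
  | nil => rfl
  | cons k t ih => rw [LNSl_cons, LNSl_cons, LNSstep_conjT, ih]

private lemma LNS_eq
    (P : Matrix ((∀ i, κX i) × (∀ i, κY i)) ((∀ i, κX i) × (∀ i, κY i)) ℂ) :
    LNS P = LNSl (List.finRange N) P := rfl

/-! ### adjointness -/

private lemma floorY_adjoint (j : Fin N)
    (P Q : Matrix ((∀ i, κX i) × (∀ i, κY i)) ((∀ i, κX i) × (∀ i, κY i)) ℂ) :
    ((floorY j P)ᴴ * Q).trace = (Pᴴ * floorY j Q).trace := by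
  rw [trace_conjT_mul, trace_conjT_mul, ← Fintype.sum_prod_type', ← Fintype.sum_prod_type']
  have key := swap_sum
    (fun w : (((∀ i, κX i) × (∀ i, κY i)) × ((∀ i, κX i) × (∀ i, κY i))) => w.1.2 j = w.2.2 j)
    (fun w c => ((w.1.1, Function.update w.1.2 j c), (w.2.1, Function.update w.2.2 j c)))
    (fun w => w.1.2 j)
    (fun w c hw => by simp)
    (fun w c hw => by
      refine Prod.ext (Prod.ext rfl ?_) (Prod.ext rfl ?_)
      · simp [Function.update_idem]
      · simp [Function.update_idem, hw])
    (fun w c hw => by simp)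
    (fun w => (Fintype.card (κY j) : ℂ)⁻¹ * star (P w.1 w.2))
    (fun w => Q w.1 w.2)
  calc ∑ w : ((∀ i, κX i) × (∀ i, κY i)) × ((∀ i, κX i) × (∀ i, κY i)),
        star ((floorY j P) w.1 w.2) * Q w.1 w.2
      = ∑ w : ((∀ i, κX i) × (∀ i, κY i)) × ((∀ i, κX i) × (∀ i, κY i)),
          (if w.1.2 j = w.2.2 j then
            ∑ c : κY j, ((Fintype.card (κY j) : ℂ)⁻¹ *
              star (P (w.1.1, Function.update w.1.2 j c) (w.2.1, Function.update w.2.2 j c))) *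
              Q w.1 w.2
          else 0) := by
        refine Finset.sum_congr rfl fun w _ => ?_
        simp only [floorY, Matrix.of_apply]
        split_ifs with h
        · rw [star_mul', star_sum, star_inv₀, star_natCast, Finset.mul_sum, Finset.sum_mul]
        · simp
    _ = ∑ w : ((∀ i, κX i) × (∀ i, κY i)) × ((∀ i, κX i) × (∀ i, κY i)),
          (if w.1.2 j = w.2.2 j then
            ∑ c : κY j, ((Fintype.card (κY j) : ℂ)⁻¹ * star (P w.1 w.2)) *
              Q (w.1.1, Function.update w.1.2 j c) (w.2.1, Function.update w.2.2 j c)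
          else 0) := key
    _ = ∑ w : ((∀ i, κX i) × (∀ i, κY i)) × ((∀ i, κX i) × (∀ i, κY i)),
          star (P w.1 w.2) * (floorY j Q) w.1 w.2 := by
        refine Finset.sum_congr rfl fun w _ => ?_
        simp only [floorY, Matrix.of_apply]
        split_ifs with h
        · simp only [Finset.mul_sum]
          refine Finset.sum_congr rfl fun c _ => ?_
          ring
        · simp

private lemma floorXY_adjoint (j : Fin N)
    (P Q : Matrix ((∀ i, κX i) × (∀ i, κY i)) ((∀ i, κX i) × (∀ i, κY i)) ℂ) :
    ((floorXY j P)ᴴ * Q).trace = (Pᴴ * floorXY j Q).trace := by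
  rw [trace_conjT_mul, trace_conjT_mul, ← Fintype.sum_prod_type', ← Fintype.sum_prod_type']
  have key := swap_sum
    (fun w : (((∀ i, κX i) × (∀ i, κY i)) × ((∀ i, κX i) × (∀ i, κY i))) =>
      w.1.1 j = w.2.1 j ∧ w.1.2 j = w.2.2 j)
    (fun w x => ((Function.update w.1.1 j x.1, Function.update w.1.2 j x.2),
                 (Function.update w.2.1 j x.1, Function.update w.2.2 j x.2)))
    (fun w => (w.1.1 j, w.1.2 j))
    (fun w x hw => by simp)
    (fun w x hw => by
      refine Prod.ext (Prod.ext ?_ ?_) (Prod.ext ?_ ?_)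
      · simp [Function.update_idem]
      · simp [Function.update_idem]
      · simp [Function.update_idem, hw.1]
      · simp [Function.update_idem, hw.2])
    (fun w x hw => by simp)
    (fun w => ((Fintype.card (κX j) : ℂ) * (Fintype.card (κY j) : ℂ))⁻¹ * star (P w.1 w.2))
    (fun w => Q w.1 w.2)
  calc ∑ w : ((∀ i, κX i) × (∀ i, κY i)) × ((∀ i, κX i) × (∀ i, κY i)),
        star ((floorXY j P) w.1 w.2) * Q w.1 w.2
      = ∑ w : ((∀ i, κX i) × (∀ i, κY i)) × ((∀ i, κX i) × (∀ i, κY i)),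
          (if w.1.1 j = w.2.1 j ∧ w.1.2 j = w.2.2 j then
            ∑ x : κX j × κY j, (((Fintype.card (κX j) : ℂ) * (Fintype.card (κY j) : ℂ))⁻¹ *
              star (P (Function.update w.1.1 j x.1, Function.update w.1.2 j x.2)
                      (Function.update w.2.1 j x.1, Function.update w.2.2 j x.2))) *
              Q w.1 w.2
          else 0) := by
        refine Finset.sum_congr rfl fun w _ => ?_
        simp only [floorXY, Matrix.of_apply]
        split_ifs with h
        · rw [star_mul', star_sum]
          simp only [star_sum]
          rw [show (star (((Fintype.card (κX j) : ℂ) * (Fintype.card (κY j) : ℂ))⁻¹) : ℂ)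
              = ((Fintype.card (κX j) : ℂ) * (Fintype.card (κY j) : ℂ))⁻¹ by
            simp]
          rw [← Fintype.sum_prod_type', Finset.mul_sum, Finset.sum_mul]
        · simp
    _ = ∑ w : ((∀ i, κX i) × (∀ i, κY i)) × ((∀ i, κX i) × (∀ i, κY i)),
          (if w.1.1 j = w.2.1 j ∧ w.1.2 j = w.2.2 j then
            ∑ x : κX j × κY j, (((Fintype.card (κX j) : ℂ) * (Fintype.card (κY j) : ℂ))⁻¹ *
              star (P w.1 w.2)) *
              Q (Function.update w.1.1 j x.1, Function.update w.1.2 j x.2)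
                (Function.update w.2.1 j x.1, Function.update w.2.2 j x.2)
          else 0) := key
    _ = ∑ w : ((∀ i, κX i) × (∀ i, κY i)) × ((∀ i, κX i) × (∀ i, κY i)),
          star (P w.1 w.2) * (floorXY j Q) w.1 w.2 := by
        refine Finset.sum_congr rfl fun w _ => ?_
        simp only [floorXY, Matrix.of_apply]
        split_ifs with h
        · rw [← Fintype.sum_prod_type']
          simp only [Finset.mul_sum]
          refine Finset.sum_congr rfl fun x _ => ?_
          ring
        · simp

private lemma LNSstep_adjoint (j : Fin N)
    (P Q : Matrix ((∀ i, κX i) × (∀ i, κY i)) ((∀ i, κX i) × (∀ i, κY i)) ℂ) :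
    ((LNSstep j P)ᴴ * Q).trace = (Pᴴ * LNSstep j Q).trace := by
  simp only [LNSstep, conjTranspose_add, conjTranspose_sub, Matrix.add_mul, Matrix.sub_mul,
    Matrix.mul_add, Matrix.mul_sub, Matrix.trace_add, Matrix.trace_sub,
    floorY_adjoint, floorXY_adjoint]

private lemma LNSl_adjoint (l : List (Fin N)) (hl : l.Nodup)
    (P Q : Matrix ((∀ i, κX i) × (∀ i, κY i)) ((∀ i, κX i) × (∀ i, κY i)) ℂ) :
    ((LNSl l P)ᴴ * Q).trace = (Pᴴ * LNSl l Q).trace := by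
  induction l generalizing Q with
  | nil => rfl
  | cons k t ih =>
    rw [LNSl_cons, LNSstep_adjoint, ih (List.nodup_cons.mp hl).2 (LNSstep k Q),
      ← step_comm_LNSl (List.nodup_cons.mp hl).1, ← LNSl_cons]

theorem lns_orthogonal_projection_onto_no_signaling_subspace :
    (∀ P : Matrix ((∀ i, κX i) × (∀ i, κY i)) ((∀ i, κX i) × (∀ i, κY i)) ℂ,
      LNS (LNS P) = LNS P) ∧
    (∀ P Q : Matrix ((∀ i, κX i) × (∀ i, κY i)) ((∀ i, κX i) × (∀ i, κY i)) ℂ,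
      ((LNS P)ᴴ * Q).trace = (Pᴴ * LNS Q).trace) ∧
    (∀ J : Matrix ((∀ i, κX i) × (∀ i, κY i)) ((∀ i, κX i) × (∀ i, κY i)) ℂ,
      J.IsHermitian → (LNS J).IsHermitian) ∧
    (∀ J : Matrix ((∀ i, κX i) × (∀ i, κY i)) ((∀ i, κX i) × (∀ i, κY i)) ℂ,
      J.IsHermitian →
        (LNS J = J ↔ ∀ j : Fin N, floorY j J = floorXY j J)) := by
  refine ⟨fun P => ?_, fun P Q => ?_, fun J hJ => ?_, fun J hJ => ?_⟩
  · rw [LNS_eq, LNS_eq, LNSl_idem (List.nodup_finRange N)]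
  · rw [LNS_eq, LNS_eq]
    exact LNSl_adjoint _ (List.nodup_finRange N) P Q
  · show (LNS J)ᴴ = LNS J
    rw [LNS_eq, LNSl_conjT, hJ.eq]
  · constructor
    · intro hfix j
      have h1 : LNSstep j J = J := by
        conv_lhs => rw [← hfix, LNS_eq]
        rw [step_fix (List.mem_finRange j), ← LNS_eq, hfix]
      have h2 : floorY j J - floorXY j J = J - LNSstep j J := by
        rw [LNSstep]; abel
      rw [h1, sub_self] at h2
      exact sub_eq_zero.mp h2
    · intro hns
      have hstep : ∀ j : Fin N, LNSstep j J = J := by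
        intro j
        rw [LNSstep, hns j]
        exact sub_add_cancel J (floorXY j J)
      have hall : ∀ l : List (Fin N), LNSl l J = J := by
        intro l
        induction l with
        | nil => rfl
        | cons k t ih => rw [LNSl_cons, ih, hstep k]
      rw [LNS_eq]
      exact hall _

end ICO
end

section
/- Let m ≥ 2 be an integer and α ∈ [0,1]. Let Δ^m be the channel on m×m matrices defined by Δ^m(σ) := Σ_{j=1}^m ⟨j|σ|j⟩ |j⟩⟨j|, and let M be the channel on m×m matrices whose Choi operator is J^M := (1−α)·J^{Δ^m} + (α/(m−1))·(I_{m²} − J^{Δ^m}), where J^{Δ^m} := Σ_{j=1}^m |j⟩⟨j|⊗|j⟩⟨j|. Then the diamond distance satisfies ½‖M − Δ^m‖_◇ = α, where ½‖M − Δ^m‖_◇ := sup over density matrices ρ on ℂ^m⊗ℂ^m of ½‖(id⊗M)(ρ) − (id⊗Δ^m)(ρ)‖₁. -/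
/-!
STATEMENT 5: For m ≥ 2 and α ∈ [0,1], the channel M with Choi operator
(1−α)·J^{Δ^m} + (α/(m−1))·(I − J^{Δ^m}) satisfies ½‖M − Δ^m‖_◇ = α.
-/

open Matrix
open scoped Classical ComplexOrder

namespace ICO

/-- Trace norm of a Hermitian matrix: the sum of the absolute values of its eigenvalues
(junk value 0 on non-Hermitian matrices). -/
noncomputable def traceNorm {n : Type} [Fintype n] [DecidableEq n]
    (H : Matrix n n ℂ) : ℝ :=
  if h : H.IsHermitian then ∑ i, |h.eigenvalues i| else 0

/-- A density matrix: positive semidefinite with unit trace. -/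
def IsDensity {n : Type} [Fintype n] (ρ : Matrix n n ℂ) : Prop :=
  ρ.PosSemidef ∧ ρ.trace = 1

/-- Action of the channel with Choi operator `J` (on A⊗B) on a state of R⊗A,
acting as the identity on the reference R:  `(id_R ⊗ C)(ρ)`. -/
noncomputable def applyChoi {A B R : Type} [Fintype A]
    (J : Matrix (A × B) (A × B) ℂ) (ρ : Matrix (R × A) (R × A) ℂ) :
    Matrix (R × B) (R × B) ℂ :=
  Matrix.of fun p q => ∑ a : A, ∑ a' : A, ρ (p.1, a) (q.1, a') * J (a, p.2) (a', q.2)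

/-- Choi operator of the noiseless classical channel `Δ^m`. -/
noncomputable def JDelta (m : ℕ) : Matrix (Fin m × Fin m) (Fin m × Fin m) ℂ :=
  Matrix.of fun p q => if p.1 = p.2 ∧ q.1 = q.2 ∧ p.1 = q.1 then 1 else 0

/-- Half the diamond distance between the channels with Choi operators `J₁, J₂`
(both from an m-dimensional system A to B), with an m-dimensional reference system. -/
noncomputable def dDist {A B : Type} [Fintype A] [DecidableEq A] [Fintype B] [DecidableEq B]
    (J₁ J₂ : Matrix (A × B) (A × B) ℂ) : ℝ :=
  sSup { t : ℝ | ∃ ρ : Matrix (A × A) (A × A) ℂ, IsDensity ρ ∧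
    t = (1 / 2) * traceNorm (applyChoi J₁ ρ - applyChoi J₂ ρ) }

/-! ### Auxiliary lemmas: generalities on PSD matrices and the trace norm -/

section TraceNormLemmas

variable {n : Type} [Fintype n] [DecidableEq n]

lemma psd_diag_nonneg {M : Matrix n n ℂ} (hM : M.PosSemidef) (i : n) : 0 ≤ M i i := by
  have := hM.dotProduct_mulVec_nonneg (Pi.single i 1)
  simpa [dotProduct, mulVec, Pi.single_apply, Finset.sum_ite_eq', mul_comm] using this

lemma psd_trace_re_nonneg {M : Matrix n n ℂ} (hM : M.PosSemidef) : 0 ≤ M.trace.re := by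
  rw [Matrix.trace, Complex.re_sum]
  exact Finset.sum_nonneg fun i _ => (Complex.nonneg_iff.mp (psd_diag_nonneg hM i)).1

lemma trace_mul_psd_re_nonneg {A B : Matrix n n ℂ} (hA : A.PosSemidef) (hB : B.PosSemidef) :
    0 ≤ ((A * B).trace).re := by
  obtain ⟨C, rfl⟩ : ∃ C : Matrix n n ℂ, B = Cᴴ * C := by
    open scoped MatrixOrder in
    obtain ⟨C, hC⟩ := CStarAlgebra.nonneg_iff_eq_star_mul_self.mp hB.nonneg
    exact ⟨C, hC⟩
  have h1 : (A * (Cᴴ * C)).trace = (C * A * Cᴴ).trace := by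
    rw [← mul_assoc, Matrix.trace_mul_cycle]
  rw [h1]
  exact psd_trace_re_nonneg (hA.mul_mul_conjTranspose_same C)

lemma trace_mul_herm {H : Matrix n n ℂ} (hH : H.IsHermitian) (W : Matrix n n ℂ) :
    (W * H).trace = ∑ i, ((star (hH.eigenvectorUnitary : Matrix n n ℂ)) * W *
      (hH.eigenvectorUnitary : Matrix n n ℂ)) i i * (hH.eigenvalues i : ℂ) := by
  set U := (hH.eigenvectorUnitary : Matrix n n ℂ)
  have h1 : (W * H).trace
      = ((star U * W * U) * diagonal (Complex.ofReal ∘ hH.eigenvalues)).trace := by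
    conv_lhs => rw [hH.spectral_theorem]
    change (W * (U * diagonal (RCLike.ofReal ∘ hH.eigenvalues) * star U)).trace = _
    rw [show W * (U * diagonal (RCLike.ofReal ∘ hH.eigenvalues) * star U)
        = (W * U * diagonal (RCLike.ofReal ∘ hH.eigenvalues)) * star U by simp only [mul_assoc]]
    rw [Matrix.trace_mul_cycle]
    simp only [mul_assoc]
    rfl
  rw [h1, Matrix.trace]
  congr 1
  ext i
  rw [Matrix.diag_apply, Matrix.mul_diagonal]
  rfl

lemma re_trace_mul_le_traceNorm {H W : Matrix n n ℂ} (hH : H.IsHermitian)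
    (h1 : (1 - W).PosSemidef) (h2 : (1 + W).PosSemidef) :
    ((W * H).trace).re ≤ traceNorm H := by
  set U := (hH.eigenvectorUnitary : Matrix n n ℂ) with hUdef
  set M := star U * W * U with hMdef
  have key : ∀ i, |(M i i).re| ≤ 1 := by
    intro i
    have hsub : (1 : Matrix n n ℂ) - M = Uᴴ * (1 - W) * U := by
      have hU : star U * U = 1 := mem_unitaryGroup_iff'.mp hH.eigenvectorUnitary.2
      rw [← Matrix.star_eq_conjTranspose, mul_sub, sub_mul, mul_one, hU, hMdef]
    have hadd : (1 : Matrix n n ℂ) + M = Uᴴ * (1 + W) * U := by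
      have hU : star U * U = 1 := mem_unitaryGroup_iff'.mp hH.eigenvectorUnitary.2
      rw [← Matrix.star_eq_conjTranspose, mul_add, add_mul, mul_one, hU, hMdef]
    have p1 : ((1 : Matrix n n ℂ) - M).PosSemidef := hsub ▸ h1.conjTranspose_mul_mul_same U
    have p2 : ((1 : Matrix n n ℂ) + M).PosSemidef := hadd ▸ h2.conjTranspose_mul_mul_same U
    have e1 := (Complex.nonneg_iff.mp (psd_diag_nonneg p1 i)).1
    have e2 := (Complex.nonneg_iff.mp (psd_diag_nonneg p2 i)).1
    simp only [Matrix.sub_apply, Matrix.add_apply, Matrix.one_apply_eq, Complex.sub_re,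
      Complex.add_re, Complex.one_re] at e1 e2
    rw [abs_le]; constructor <;> linarith
  rw [trace_mul_herm hH W, Complex.re_sum, traceNorm, dif_pos hH]
  apply Finset.sum_le_sum
  intro i _
  have hre : (M i i * (hH.eigenvalues i : ℂ)).re = (M i i).re * hH.eigenvalues i := by
    simp [Complex.mul_re]
  rw [hre]
  calc (M i i).re * hH.eigenvalues i ≤ |(M i i).re * hH.eigenvalues i| := le_abs_self _
    _ = |(M i i).re| * |hH.eigenvalues i| := abs_mul _ _
    _ ≤ 1 * |hH.eigenvalues i| := mul_le_mul_of_nonneg_right (key i) (abs_nonneg _)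
    _ = _ := one_mul _

lemma traceNorm_sub_le {P N : Matrix n n ℂ} (hP : P.PosSemidef) (hN : N.PosSemidef) :
    traceNorm (P - N) ≤ P.trace.re + N.trace.re := by
  have hH : (P - N).IsHermitian := hP.1.sub hN.1
  set U := (hH.eigenvectorUnitary : Matrix n n ℂ) with hUdef
  have hU : star U * U = 1 := mem_unitaryGroup_iff'.mp hH.eigenvectorUnitary.2
  set s : n → ℂ := fun i => if 0 ≤ hH.eigenvalues i then (1:ℂ) else -1 with hsdef
  set W := U * diagonal s * star U with hWdef
  have hMW : star U * W * U = diagonal s := by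
    rw [hWdef]
    calc star U * (U * diagonal s * star U) * U
        = (star U * U) * diagonal s * (star U * U) := by simp only [mul_assoc]
      _ = diagonal s := by rw [hU]; simp
  have htr : ((W * (P - N)).trace).re = traceNorm (P - N) := by
    rw [trace_mul_herm hH W, hMW, traceNorm, dif_pos hH, Complex.re_sum]
    congr 1; ext i
    rw [diagonal_apply_eq, hsdef]
    by_cases h : 0 ≤ hH.eigenvalues i
    · simp [h, abs_of_nonneg h]
    · simp only [h, if_false]
      simp [abs_of_neg (lt_of_not_ge h), Complex.ofReal_neg]
  have hdiagPSD : ∀ (d : n → ℂ), (∀ i, 0 ≤ d i) → (U * diagonal d * star U).PosSemidef := by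
    intro d hd
    simpa [Matrix.star_eq_conjTranspose] using
      (PosSemidef.diagonal hd).mul_mul_conjTranspose_same U
  have hUUstar : U * star U = 1 := mem_unitaryGroup_iff.mp hH.eigenvectorUnitary.2
  have h1W : ((1 : Matrix n n ℂ) - W).PosSemidef := by
    have hd : (1 : Matrix n n ℂ) - W = U * diagonal (fun i => 1 - s i) * star U := by
      have hdd : diagonal (fun i => 1 - s i) = 1 - diagonal s := by
        rw [← diagonal_one, diagonal_sub]
      rw [hdd, mul_sub, sub_mul, mul_one, hUUstar, hWdef]
    rw [hd]
    apply hdiagPSD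
    intro i
    rw [hsdef]
    by_cases h : 0 ≤ hH.eigenvalues i <;> simp [h] <;> norm_num
  have h2W : ((1 : Matrix n n ℂ) + W).PosSemidef := by
    have hd : (1 : Matrix n n ℂ) + W = U * diagonal (fun i => 1 + s i) * star U := by
      have hdd : diagonal (fun i => 1 + s i) = 1 + diagonal s := by
        rw [← diagonal_one, diagonal_add]
      rw [hdd, mul_add, add_mul, mul_one, hUUstar, hWdef]
    rw [hd]
    apply hdiagPSD
    intro i
    rw [hsdef]
    by_cases h : 0 ≤ hH.eigenvalues i <;> simp [h] <;> norm_num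
  have e1 : 0 ≤ (((1 - W) * P).trace).re := trace_mul_psd_re_nonneg h1W hP
  have e2 : 0 ≤ (((1 + W) * N).trace).re := trace_mul_psd_re_nonneg h2W hN
  rw [sub_mul, one_mul, trace_sub, Complex.sub_re] at e1
  rw [add_mul, one_mul, trace_add, Complex.add_re] at e2
  have hsplit : (W * (P - N)).trace = (W * P).trace - (W * N).trace := by
    rw [mul_sub, trace_sub]
  rw [← htr, hsplit, Complex.sub_re]
  linarith

end TraceNormLemmas

/-! ### Auxiliary lemmas: structure of the channels -/

section ChannelLemmas

variable {m : ℕ}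

/-- `Fdel ρ`: pinching of `ρ` in the second tensor factor; this is `(id ⊗ Δ^m)(ρ)`. -/
noncomputable def Fdel (ρ : Matrix (Fin m × Fin m) (Fin m × Fin m) ℂ) :
    Matrix (Fin m × Fin m) (Fin m × Fin m) ℂ :=
  Matrix.of fun p q => if p.2 = q.2 then ρ p q else 0

lemma Fdel_psd {ρ : Matrix (Fin m × Fin m) (Fin m × Fin m) ℂ} (hρ : ρ.PosSemidef) :
    (Fdel ρ).PosSemidef := by
  refine PosSemidef.of_dotProduct_mulVec_nonneg ?_ ?_
  · ext p q
    simp only [conjTranspose_apply, Fdel, Matrix.of_apply, apply_ite (starRingEnd ℂ), star_zero]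
    have hconj := congrFun (congrFun hρ.1 p) q
    simp only [conjTranspose_apply] at hconj
    split_ifs with h1 h2 <;> simp_all [eq_comm]
  · intro x
    have key : star x ⬝ᵥ (Fdel ρ) *ᵥ x =
        ∑ b : Fin m, star (fun u : Fin m × Fin m => if u.2 = b then x u else 0) ⬝ᵥ
          ρ *ᵥ (fun u : Fin m × Fin m => if u.2 = b then x u else 0) := by
      simp only [dotProduct, mulVec, Fdel, Matrix.of_apply, Pi.star_apply,
        apply_ite (starRingEnd ℂ), star_zero, Finset.mul_sum, mul_ite, ite_mul, zero_mul, mul_zero]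
      conv_rhs => rw [Finset.sum_comm]
      apply Finset.sum_congr rfl; intro u _
      rw [Finset.sum_comm]
      apply Finset.sum_congr rfl; intro v _
      simp only [Finset.sum_ite_eq, Finset.mem_univ, if_true]
      split_ifs <;> simp
    rw [key]
    exact Finset.sum_nonneg fun b _ => hρ.dotProduct_mulVec_nonneg _

/-- Translation of the second tensor factor. -/
noncomputable def tr2 [NeZero m] (k : Fin m) (ρ : Matrix (Fin m × Fin m) (Fin m × Fin m) ℂ) :
    Matrix (Fin m × Fin m) (Fin m × Fin m) ℂ :=
  ρ.submatrix (fun p => (p.1, p.2 - k)) (fun p => (p.1, p.2 - k))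

lemma tr2_psd [NeZero m] (k : Fin m) {ρ : Matrix (Fin m × Fin m) (Fin m × Fin m) ℂ}
    (hρ : ρ.PosSemidef) : (tr2 k ρ).PosSemidef := hρ.submatrix _

lemma applyChoi_JDelta (ρ : Matrix (Fin m × Fin m) (Fin m × Fin m) ℂ) :
    applyChoi (JDelta m) ρ = Fdel ρ := by
  ext p q
  simp only [applyChoi, JDelta, Fdel, Matrix.of_apply, mul_ite, mul_one, mul_zero, ite_and,
    Finset.sum_ite_eq, Finset.sum_ite_eq', Finset.mem_univ, if_true]
  simp

lemma applyChoi_one_apply (ρ : Matrix (Fin m × Fin m) (Fin m × Fin m) ℂ) (p q : Fin m × Fin m) :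
    applyChoi (1 : Matrix (Fin m × Fin m) (Fin m × Fin m) ℂ) ρ p q
      = if p.2 = q.2 then ∑ a, ρ (p.1, a) (q.1, a) else 0 := by
  simp only [applyChoi, Matrix.one_apply, Matrix.of_apply, Prod.mk.injEq, ite_and, mul_ite,
    mul_one, mul_zero, Finset.sum_ite_eq, Finset.sum_ite_eq', Finset.mem_univ, if_true]
  simp [Finset.sum_ite_irrel, Finset.sum_ite_eq', eq_comm]

lemma applyChoi_one [NeZero m] (ρ : Matrix (Fin m × Fin m) (Fin m × Fin m) ℂ) :
    applyChoi (1 : Matrix (Fin m × Fin m) (Fin m × Fin m) ℂ) ρ = ∑ k : Fin m, Fdel (tr2 k ρ) := by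
  ext p q
  rw [applyChoi_one_apply]
  simp only [Matrix.sum_apply, Fdel, tr2, Matrix.of_apply, submatrix_apply]
  by_cases h : p.2 = q.2
  · simp only [h, if_true]
    rw [← h]
    exact (Fintype.sum_equiv (Equiv.subLeft p.2) _ _ (fun k => by simp)).symm
  · simp [h]

lemma applyChoi_sub {A B R : Type} [Fintype A] [Fintype R] [Fintype B]
    (J₁ J₂ : Matrix (A × B) (A × B) ℂ) (ρ : Matrix (R × A) (R × A) ℂ) :
    applyChoi (J₁ - J₂) ρ = applyChoi J₁ ρ - applyChoi J₂ ρ := by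
  ext p q
  simp [applyChoi, mul_sub, Finset.sum_sub_distrib]

lemma applyChoi_add {A B R : Type} [Fintype A] [Fintype R] [Fintype B]
    (J₁ J₂ : Matrix (A × B) (A × B) ℂ) (ρ : Matrix (R × A) (R × A) ℂ) :
    applyChoi (J₁ + J₂) ρ = applyChoi J₁ ρ + applyChoi J₂ ρ := by
  ext p q
  simp [applyChoi, mul_add, Finset.sum_add_distrib]

lemma applyChoi_smul {A B R : Type} [Fintype A] [Fintype R] [Fintype B] (r : ℝ)
    (J : Matrix (A × B) (A × B) ℂ) (ρ : Matrix (R × A) (R × A) ℂ) :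
    applyChoi (r • J) ρ = r • applyChoi J ρ := by
  ext p q
  simp [applyChoi, Complex.real_smul, Finset.mul_sum, mul_left_comm]

lemma real_smul_psd {n : Type} [Fintype n] {r : ℝ} (hr : 0 ≤ r) {M : Matrix n n ℂ}
    (hM : M.PosSemidef) : ((r : ℝ) • M).PosSemidef := by
  have h : (r : ℝ) • M = (r : ℂ) • M := by
    ext p q; simp [Complex.real_smul]
  rw [h]
  refine PosSemidef.of_dotProduct_mulVec_nonneg ?_ ?_
  · ext p q
    simp only [conjTranspose_apply, Matrix.smul_apply, star_smul, RCLike.star_def]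
    rw [Complex.conj_ofReal]
    have hconj := congrFun (congrFun hM.1 p) q
    simp only [conjTranspose_apply] at hconj
    exact congrArg _ hconj
  · intro x
    rw [smul_mulVec, dotProduct_smul]
    exact smul_nonneg (Complex.zero_le_real.mpr hr) (hM.dotProduct_mulVec_nonneg x)

lemma trace_Fdel (ρ : Matrix (Fin m × Fin m) (Fin m × Fin m) ℂ) :
    (Fdel ρ).trace = ρ.trace := by
  simp [Matrix.trace, Fdel]

lemma trace_tr2 [NeZero m] (k : Fin m) (ρ : Matrix (Fin m × Fin m) (Fin m × Fin m) ℂ) :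
    (tr2 k ρ).trace = ρ.trace := by
  simp only [Matrix.trace, tr2, Matrix.diag_apply, submatrix_apply]
  rw [Fintype.sum_prod_type]
  conv_rhs => rw [Fintype.sum_prod_type]
  apply Finset.sum_congr rfl
  intro r _
  exact Fintype.sum_equiv (Equiv.subRight k) _ _ (fun b => by simp)

/-- The one-minus-delta Choi applied to a state, as a sum of PSD pieces. -/
lemma applyChoi_one_sub [NeZero m] (ρ : Matrix (Fin m × Fin m) (Fin m × Fin m) ℂ) :
    applyChoi ((1 : Matrix (Fin m × Fin m) (Fin m × Fin m) ℂ) - JDelta m) ρ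
      = ∑ k : Fin m, (if k = 0 then 0 else Fdel (tr2 k ρ)) := by
  have h00 : tr2 (0 : Fin m) ρ = ρ := by
    ext p q; simp [tr2]
  rw [applyChoi_sub, applyChoi_one, applyChoi_JDelta]
  rw [show Fdel ρ = ∑ k : Fin m, (if k = 0 then Fdel (tr2 k ρ) else 0) by
    simp [Finset.sum_ite_eq, h00]]
  rw [← Finset.sum_sub_distrib]
  apply Finset.sum_congr rfl
  intro k _
  split_ifs <;> simp

lemma applyChoi_one_sub_psd [NeZero m] {ρ : Matrix (Fin m × Fin m) (Fin m × Fin m) ℂ}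
    (hρ : ρ.PosSemidef) :
    (applyChoi ((1 : Matrix (Fin m × Fin m) (Fin m × Fin m) ℂ) - JDelta m) ρ).PosSemidef := by
  rw [applyChoi_one_sub]
  refine Finset.sum_induction _ Matrix.PosSemidef (fun a b ha hb => ha.add hb) Matrix.PosSemidef.zero ?_
  intro k _
  split_ifs
  · exact Matrix.PosSemidef.zero
  · exact Fdel_psd (tr2_psd k hρ)

lemma applyChoi_one_sub_trace [NeZero m] (ρ : Matrix (Fin m × Fin m) (Fin m × Fin m) ℂ) :
    (applyChoi ((1 : Matrix (Fin m × Fin m) (Fin m × Fin m) ℂ) - JDelta m) ρ).trace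
      = ((m : ℂ) - 1) * ρ.trace := by
  rw [applyChoi_sub, trace_sub, applyChoi_one, applyChoi_JDelta, trace_sum, trace_Fdel]
  simp only [trace_Fdel, trace_tr2]
  rw [Finset.sum_const, Finset.card_univ, Fintype.card_fin]
  push_cast
  ring

end ChannelLemmas

theorem dDist_noisy_delta (m : ℕ) (hm : 2 ≤ m) (α : ℝ) (hα₀ : 0 ≤ α) (hα₁ : α ≤ 1) :
    dDist ((1 - α) • JDelta m + (α / ((m : ℝ) - 1)) •
        ((1 : Matrix (Fin m × Fin m) (Fin m × Fin m) ℂ) - JDelta m))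
      (JDelta m) = α := by
  haveI : NeZero m := ⟨by omega⟩
  have hm2 : (2:ℝ) ≤ (m:ℝ) := by exact_mod_cast hm
  have hm1 : ((m:ℝ) - 1) ≠ 0 := by linarith
  have hc0 : 0 ≤ α / ((m:ℝ) - 1) := div_nonneg hα₀ (by linarith)
  set J₁ := (1 - α) • JDelta m + (α / ((m : ℝ) - 1)) •
      ((1 : Matrix (Fin m × Fin m) (Fin m × Fin m) ℂ) - JDelta m) with hJ₁def
  have hdiff : ∀ ρ : Matrix (Fin m × Fin m) (Fin m × Fin m) ℂ,
      applyChoi J₁ ρ - applyChoi (JDelta m) ρ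
        = (α / ((m:ℝ)-1)) • applyChoi
            ((1 : Matrix (Fin m × Fin m) (Fin m × Fin m) ℂ) - JDelta m) ρ
          - α • applyChoi (JDelta m) ρ := by
    intro ρ
    have h0 : J₁ - JDelta m = (α / ((m:ℝ)-1)) •
        ((1 : Matrix (Fin m × Fin m) (Fin m × Fin m) ℂ) - JDelta m) + (-α) • JDelta m := by
      rw [hJ₁def]; module
    rw [← applyChoi_sub, h0, applyChoi_add, applyChoi_smul, applyChoi_smul, neg_smul,
      ← sub_eq_add_neg]
  have hupper : ∀ ρ : Matrix (Fin m × Fin m) (Fin m × Fin m) ℂ, IsDensity ρ →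
      (1 / 2) * traceNorm (applyChoi J₁ ρ - applyChoi (JDelta m) ρ) ≤ α := by
    intro ρ hρ
    have hP : ((α / ((m:ℝ)-1)) • applyChoi
        ((1 : Matrix (Fin m × Fin m) (Fin m × Fin m) ℂ) - JDelta m) ρ).PosSemidef :=
      real_smul_psd hc0 (applyChoi_one_sub_psd hρ.1)
    have hN : (α • applyChoi (JDelta m) ρ).PosSemidef := by
      rw [applyChoi_JDelta]; exact real_smul_psd hα₀ (Fdel_psd hρ.1)
    have hPt : ((α / ((m:ℝ)-1)) • applyChoi
        ((1 : Matrix (Fin m × Fin m) (Fin m × Fin m) ℂ) - JDelta m) ρ).trace.re = α := by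
      rw [Matrix.trace_smul, applyChoi_one_sub_trace, hρ.2, mul_one, Complex.real_smul]
      have h2 : ((m:ℂ) - 1) = (((m:ℝ) - 1 : ℝ) : ℂ) := by push_cast; ring
      rw [h2, ← Complex.ofReal_mul, Complex.ofReal_re]
      field_simp
    have hNt : (α • applyChoi (JDelta m) ρ).trace.re = α := by
      rw [Matrix.trace_smul, applyChoi_JDelta, trace_Fdel, hρ.2, Complex.real_smul, mul_one,
        Complex.ofReal_re]
    have hTN := traceNorm_sub_le hP hN
    rw [hPt, hNt, ← hdiff ρ] at hTN
    linarith
  -- the witness state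
  set ρ₀ : Matrix (Fin m × Fin m) (Fin m × Fin m) ℂ :=
    Matrix.of fun p q => if p = ((0 : Fin m), (0 : Fin m)) ∧ q = ((0 : Fin m), (0 : Fin m))
      then 1 else 0 with hρ₀def
  have hρ₀ : IsDensity ρ₀ := by
    refine ⟨PosSemidef.of_dotProduct_mulVec_nonneg ?_ ?_, ?_⟩
    · ext p q
      simp only [conjTranspose_apply, hρ₀def, Matrix.of_apply]
      split_ifs with h1 h2 <;> simp_all [and_comm]
    · intro x
      have hform : star x ⬝ᵥ ρ₀ *ᵥ x = star (x ((0:Fin m),(0:Fin m))) * x ((0:Fin m),(0:Fin m)) := by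
        simp [hρ₀def, dotProduct, mulVec, ite_and, Finset.sum_ite_eq', mul_ite, mul_zero,
          mul_one]
      rw [hform]
      exact star_mul_self_nonneg _
    · simp [Matrix.trace, hρ₀def, Matrix.diag_apply, Finset.sum_ite_eq']
  -- diagonal entries of the difference at the witness
  have hdiag : ∀ p : Fin m × Fin m, (applyChoi J₁ ρ₀ - applyChoi (JDelta m) ρ₀) p p
      = (if p.1 = 0 then (if p.2 = 0 then -(α:ℂ) else ((α / ((m:ℝ)-1) : ℝ) : ℂ)) else 0) := by
    intro p
    rw [hdiff ρ₀]
    have ha : applyChoi (1 : Matrix (Fin m × Fin m) (Fin m × Fin m) ℂ) ρ₀ p p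
        = (if p.1 = 0 then 1 else 0) := by
      rw [applyChoi_one_apply]
      by_cases h1 : p.1 = 0 <;> simp [hρ₀def, Prod.ext_iff, ite_and, Finset.sum_ite_eq', h1]
    have hb : applyChoi (JDelta m) ρ₀ p p = (if p = ((0:Fin m),(0:Fin m)) then 1 else 0) := by
      rw [applyChoi_JDelta]
      simp [Fdel, hρ₀def]
    rw [show applyChoi ((1 : Matrix (Fin m × Fin m) (Fin m × Fin m) ℂ) - JDelta m) ρ₀
        = applyChoi (1 : Matrix (Fin m × Fin m) (Fin m × Fin m) ℂ) ρ₀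
          - applyChoi (JDelta m) ρ₀ from applyChoi_sub _ _ _]
    simp only [Matrix.sub_apply, Matrix.smul_apply, ha, hb, Prod.ext_iff]
    by_cases h1 : p.1 = 0 <;> by_cases h2 : p.2 = 0 <;>
      simp [h1, h2, Complex.real_smul] <;> push_cast <;> field_simp <;> ring
  -- the dual witness
  set w : Fin m × Fin m → ℂ := fun p => if p.2 = 0 then (-1:ℂ) else 1 with hwdef
  have h1W : ((1 : Matrix (Fin m × Fin m) (Fin m × Fin m) ℂ) - Matrix.diagonal w).PosSemidef := by
    rw [← diagonal_one, diagonal_sub]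
    apply PosSemidef.diagonal
    intro i
    rw [hwdef]
    by_cases h : i.2 = 0 <;> simp [h, Pi.sub_apply] <;> norm_num
  have h2W : ((1 : Matrix (Fin m × Fin m) (Fin m × Fin m) ℂ) + Matrix.diagonal w).PosSemidef := by
    rw [← diagonal_one, diagonal_add]
    apply PosSemidef.diagonal
    intro i
    rw [hwdef]
    by_cases h : i.2 = 0 <;> simp [h, Pi.add_apply] <;> norm_num
  have hHerm : (applyChoi J₁ ρ₀ - applyChoi (JDelta m) ρ₀).IsHermitian := by
    rw [hdiff ρ₀]
    have hN : (α • applyChoi (JDelta m) ρ₀).PosSemidef := by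
      rw [applyChoi_JDelta]; exact real_smul_psd hα₀ (Fdel_psd hρ₀.1)
    exact (real_smul_psd hc0 (applyChoi_one_sub_psd hρ₀.1)).1.sub hN.1
  have htrW : ((Matrix.diagonal w * (applyChoi J₁ ρ₀ - applyChoi (JDelta m) ρ₀)).trace).re
      = 2 * α := by
    have hC : (Matrix.diagonal w * (applyChoi J₁ ρ₀ - applyChoi (JDelta m) ρ₀)).trace
        = ((2 * α : ℝ) : ℂ) := by
      rw [Matrix.trace]
      have hterm : ∀ p : Fin m × Fin m,
          (Matrix.diagonal w * (applyChoi J₁ ρ₀ - applyChoi (JDelta m) ρ₀)).diag p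
          = w p * (if p.1 = 0 then (if p.2 = 0 then -(α:ℂ)
              else ((α / ((m:ℝ)-1) : ℝ) : ℂ)) else 0) := by
        intro p
        rw [Matrix.diag_apply, Matrix.diagonal_mul, hdiag p]
      rw [Finset.sum_congr rfl (fun p _ => hterm p), Fintype.sum_prod_type]
      have hrow : ∀ r : Fin m, (∑ b : Fin m, w (r, b) *
          (if (r, b).1 = 0 then (if (r, b).2 = 0 then -(α:ℂ)
            else ((α / ((m:ℝ)-1) : ℝ) : ℂ)) else 0))
          = if r = 0 then ((2 * α : ℝ) : ℂ) else 0 := by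
        intro r
        by_cases hr : r = 0
        · simp only [hr, hwdef, if_true]
          have hbterm : ∀ b : Fin m,
              (if b = 0 then (-1:ℂ) else 1) * (if b = 0 then -(α:ℂ) else ((α / ((m:ℝ)-1) : ℝ) : ℂ))
              = ((α / ((m:ℝ)-1) : ℝ) : ℂ)
                + (if b = 0 then (α:ℂ) - ((α / ((m:ℝ)-1) : ℝ) : ℂ) else 0) := by
            intro b
            by_cases hb : b = 0 <;> simp [hb] <;> ring
          rw [Finset.sum_congr rfl (fun b _ => hbterm b), Finset.sum_add_distrib,
            Finset.sum_const, Finset.sum_ite_eq' Finset.univ (0 : Fin m), Finset.card_univ,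
            Fintype.card_fin]
          simp only [Finset.mem_univ, if_true, nsmul_eq_mul]
          have hm1c : ((m:ℂ) - 1) ≠ 0 := by
            intro h
            apply hm1
            have := congrArg Complex.re h
            simpa using this
          push_cast
          field_simp [hm1c]
          ring
        · simp [hr]
      rw [Finset.sum_congr rfl (fun r _ => hrow r),
        Finset.sum_ite_eq' Finset.univ (0 : Fin m)]
      simp
    rw [hC, Complex.ofReal_re]
  have hlowTN : 2 * α ≤ traceNorm (applyChoi J₁ ρ₀ - applyChoi (JDelta m) ρ₀) := by
    have := re_trace_mul_le_traceNorm hHerm h1W h2W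
    rw [htrW] at this
    exact this
  -- conclusion
  rw [dDist]
  apply le_antisymm
  · apply Real.sSup_le _ hα₀
    rintro t ⟨ρ, hρ, rfl⟩
    exact hupper ρ hρ
  · refine le_csSup_of_le ⟨α, ?_⟩ ⟨ρ₀, hρ₀, rfl⟩ ?_
    · rintro t ⟨ρ, hρ, rfl⟩
      exact hupper ρ hρ
    · linarith [hlowTN]

end ICO
end
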